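/- Let ((M_n)_{n<ω}, η, (μ^{nk})) be a depth-1 graded monad on Set, let G be a Set-endofunctor and α: G → M₁ a natural transformation (a graded semantics). Suppose a graded logic for this data (with truth-value M₀-algebra (Ω,o), truth constants Θ, propositional operators 𝒪 and modalities Λ) is both depth-0 separating and depth-1 separating. Then the logic is expressive: for every n, the evaluation maps ⟦φ⟧: M_n1 → Ω, where φ ranges over formulas of uniform depth n, are jointly injective; consequently, if two states x of a G-coalgebra (X,γ) and y of a G-coalgebra (Y,δ) are not α-trace equivalent, then there is a formula φ of some uniform depth n with ⟦φ⟧(M_n! (γ^{(n)}(x))) ≠ ⟦φ⟧(M_n! (δ^{(n)}(y))). -/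

import Mathlib

universe u

/-- A functor on `Set` (i.e. on `Type u`), given by its action on objects and maps. -/
structure SetFunctor : Type (u + 1) where
  obj : Type u → Type u
  map : ∀ {X Y : Type u}, (X → Y) → obj X → obj Y
  map_id : ∀ X : Type u, map (id : X → X) = id
  map_comp : ∀ {X Y Z : Type u} (f : X → Y) (g : Y → Z), map (g ∘ f) = map g ∘ map f

/-- A (ℕ-)graded monad on `Set`: functors `Mₙ`, a unit `η : Id → M₀` and
multiplications `μ^{nk} : MₙMₖ → M_{n+k}` subject to the unit and associativity laws
of graded monads. -/
structure GradedMonad : Type (u + 1) where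
  M : ℕ → SetFunctor.{u}
  unit : ∀ X : Type u, X → (M 0).obj X
  unit_nat : ∀ {X Y : Type u} (f : X → Y), (M 0).map f ∘ unit X = unit Y ∘ f
  mult : ∀ (n k : ℕ) (X : Type u), (M n).obj ((M k).obj X) → (M (n + k)).obj X
  mult_nat : ∀ (n k : ℕ) {X Y : Type u} (f : X → Y),
      (M (n + k)).map f ∘ mult n k X = mult n k Y ∘ (M n).map ((M k).map f)
  unit_left : ∀ (n : ℕ) (X : Type u),
      cast (congrArg (fun i => (M i).obj X) (Nat.zero_add n)) ∘
          mult 0 n X ∘ unit ((M n).obj X)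
        = id
  unit_right : ∀ (n : ℕ) (X : Type u), mult n 0 X ∘ (M n).map (unit X) = id
  assoc : ∀ (n k m : ℕ) (X : Type u),
      mult n (k + m) X ∘ (M n).map (mult k m X)
        = cast (congrArg (fun i => (M i).obj X) (Nat.add_assoc n k m)) ∘
            mult (n + k) m X ∘ mult n k ((M m).obj X)

namespace GradedMonad

variable (Mo : GradedMonad.{u})

/-- Transport along an equality of grades. -/
def castM {m n : ℕ} (h : m = n) (X : Type u) : (Mo.M m).obj X → (Mo.M n).obj X :=
  cast (congrArg (fun i => (Mo.M i).obj X) h)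

/-- The `M₀`-algebra structure `μ^{0n}` on `MₙX`. -/
def mult0 (n : ℕ) (X : Type u) : (Mo.M 0).obj ((Mo.M n).obj X) → (Mo.M n).obj X :=
  Mo.castM (Nat.zero_add n) X ∘ Mo.mult 0 n X

/-- An Eilenberg-Moore algebra for the monad `M₀`. -/
structure M0Algebra : Type (u + 1) where
  carrier : Type u
  str : (Mo.M 0).obj carrier → carrier
  str_unit : str ∘ Mo.unit carrier = id
  str_mult : str ∘ (Mo.M 0).map str = str ∘ Mo.mult 0 0 carrier

/-- `M₀`-algebra homomorphisms. -/
def IsM0Hom (A B : M0Algebra Mo) (f : A.carrier → B.carrier) : Prop :=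
  f ∘ A.str = B.str ∘ (Mo.M 0).map f

/-- An `M₁`-algebra: `M₀`-algebras `A₀`, `A₁` together with a main structure map
`a¹⁰ : M₁A₀ → A₁` satisfying homomorphy and coequalization. -/
structure M1Algebra : Type (u + 1) where
  A0 : M0Algebra Mo
  A1 : M0Algebra Mo
  a10 : (Mo.M 1).obj A0.carrier → A1.carrier
  homomorphy : a10 ∘ Mo.mult0 1 A0.carrier = A1.str ∘ (Mo.M 0).map a10
  coequalization : a10 ∘ Mo.mult 1 0 A0.carrier = a10 ∘ (Mo.M 1).map A0.str

/-- An `M₁`-algebra is canonical if it is free over its `0`-part w.r.t. the `0`-part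
functor: every `M₀`-homomorphism `f : A₀ → B₀` into the `0`-part of an `M₁`-algebra
`B` extends uniquely to an `M₁`-algebra morphism, i.e. there is a unique
`M₀`-homomorphism `g : A₁ → B₁` with `g ∘ a¹⁰ = b¹⁰ ∘ M₁f`. -/
def M1Algebra.IsCanonical (A : M1Algebra Mo) : Prop :=
  ∀ (B : M1Algebra Mo) (f : A.A0.carrier → B.A0.carrier),
    Mo.IsM0Hom A.A0 B.A0 f →
    ∃! g : A.A1.carrier → B.A1.carrier,
      Mo.IsM0Hom A.A1 B.A1 g ∧ g ∘ A.a10 = B.a10 ∘ (Mo.M 1).map f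

/-- A graded monad on `Set` is depth-1 if for every `n` the diagram
`M₁M₀Mₙ ⇉ M₁Mₙ → M_{1+n}` (parallel maps `M₁μ^{0n}` and `μ^{10}Mₙ`, cocone `μ^{1n}`)
is objectwise a coequalizer in the Eilenberg-Moore category of `M₀`-algebras. -/
def Depth1 : Prop :=
  ∀ (n : ℕ) (X : Type u),
    (Mo.mult 1 n X ∘ (Mo.M 1).map (Mo.mult0 n X)
        = Mo.mult 1 n X ∘ Mo.mult 1 0 ((Mo.M n).obj X)) ∧
    ∀ (D : M0Algebra Mo) (h : (Mo.M 1).obj ((Mo.M n).obj X) → D.carrier),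
      (h ∘ Mo.mult0 1 ((Mo.M n).obj X) = D.str ∘ (Mo.M 0).map h) →
      (h ∘ (Mo.M 1).map (Mo.mult0 n X) = h ∘ Mo.mult 1 0 ((Mo.M n).obj X)) →
      ∃! g : (Mo.M (1 + n)).obj X → D.carrier,
        (g ∘ Mo.mult0 (1 + n) X = D.str ∘ (Mo.M 0).map g) ∧
        g ∘ Mo.mult 1 n X = h

end GradedMonad

namespace GradedMonad

/-- The `α`-pretrace sequence of a `G`-coalgebra `γ : X → GX` w.r.t. the graded
semantics `α : G → M₁` : `γ⁽⁰⁾ = η_X` and `γ⁽ⁿ⁺¹⁾ = μ^{1n}_X ∘ M₁γ⁽ⁿ⁾ ∘ α_X ∘ γ`. -/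
def pretrace (Mo : GradedMonad.{u}) (G : SetFunctor.{u})
    (α : ∀ X : Type u, G.obj X → (Mo.M 1).obj X)
    {X : Type u} (γ : X → G.obj X) : (n : ℕ) → X → (Mo.M n).obj X
  | 0 => Mo.unit X
  | n + 1 =>
      Mo.castM (Nat.add_comm 1 n) X ∘ Mo.mult 1 n X ∘
        (Mo.M 1).map (pretrace Mo G α γ n) ∘ α X ∘ γ

/-- The `α`-trace sequence `Mₙ! ∘ γ⁽ⁿ⁾ : X → Mₙ1`. -/
def traceSeq (Mo : GradedMonad.{u}) (G : SetFunctor.{u})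
    (α : ∀ X : Type u, G.obj X → (Mo.M 1).obj X)
    {X : Type u} (γ : X → G.obj X) (n : ℕ) (x : X) : (Mo.M n).obj PUnit.{u + 1} :=
  (Mo.M n).map (fun _ => PUnit.unit) (Mo.pretrace G α γ n x)

end GradedMonad

/-- Formulas of a graded logic, of uniform depth `n`, over truth constants `Θ`,
propositional operators `O` (with arities `ar`) and modalities `Λ`: formulas of
depth `0` are built from truth constants by propositional operators, and formulas of
depth `n+1` are built by propositional operators from formulas `Lψ` with `L ∈ Λ` and
`ψ` of depth `n`. -/
inductive GFormula (Θ : Type u) (O : Type u) (ar : O → ℕ) (Λ : Type u) : ℕ → Type u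
  | const : Θ → GFormula Θ O ar Λ 0
  | prop {n : ℕ} (p : O) : (Fin (ar p) → GFormula Θ O ar Λ n) → GFormula Θ O ar Λ n
  | mod {n : ℕ} : Λ → GFormula Θ O ar Λ n → GFormula Θ O ar Λ (n + 1)

/-- The evaluation relation of graded logic: `Evaluates … n φ g` states that
`g : Mₙ1 → Ω` is the evaluation map `⟦φ⟧` of the depth-`n` formula `φ`, following
the recursive clauses `⟦c⟧ = o ∘ M₀ĉ`, `⟦p(φ₁,…,φ_k)⟧ = ⟦p⟧ ∘ ⟨⟦φ₁⟧,…,⟦φ_k⟧⟩`, and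
`⟦Lφ⟧ = ⟦L⟧(⟦φ⟧)`, the latter being the unique `M₀`-homomorphism `h` with
`h ∘ μ^{1n}_1 = ⟦L⟧ ∘ M₁⟦φ⟧` (by canonicity of `(Mₙ1, M_{n+1}1, μ^{1n})`). -/
inductive Evaluates (Mo : GradedMonad.{u}) (Ω : GradedMonad.M0Algebra Mo)
    {Θ O Λ : Type u} {ar : O → ℕ}
    (cI : Θ → Ω.carrier)
    (pI : ∀ p : O, (Fin (ar p) → Ω.carrier) → Ω.carrier)
    (lI : Λ → ((Mo.M 1).obj Ω.carrier → Ω.carrier)) :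
    ∀ n : ℕ, GFormula Θ O ar Λ n → ((Mo.M n).obj PUnit.{u + 1} → Ω.carrier) → Prop
  | const (c : Θ) :
      Evaluates Mo Ω cI pI lI 0 (.const c)
        (Ω.str ∘ (Mo.M 0).map (fun _ => cI c))
  | prop {n : ℕ} (p : O) (φs : Fin (ar p) → GFormula Θ O ar Λ n)
      (gs : Fin (ar p) → ((Mo.M n).obj PUnit.{u + 1} → Ω.carrier)) :
      (∀ i, Evaluates Mo Ω cI pI lI n (φs i) (gs i)) →
      Evaluates Mo Ω cI pI lI n (.prop p φs) (fun t => pI p (fun i => gs i t))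
  | mod {n : ℕ} (L : Λ) (φ : GFormula Θ O ar Λ n)
      (g : (Mo.M n).obj PUnit.{u + 1} → Ω.carrier)
      (h : (Mo.M (n + 1)).obj PUnit.{u + 1} → Ω.carrier) :
      Evaluates Mo Ω cI pI lI n φ g →
      (h ∘ Mo.mult0 (n + 1) PUnit.{u + 1} = Ω.str ∘ (Mo.M 0).map h) →
      (h ∘ Mo.castM (Nat.add_comm 1 n) PUnit.{u + 1} ∘ Mo.mult 1 n PUnit.{u + 1}
          = lI L ∘ (Mo.M 1).map g) →
      Evaluates Mo Ω cI pI lI (n + 1) (.mod L φ) h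

namespace GradedMonad

variable (Mo : GradedMonad.{u})

theorem castM_castM {a b c : ℕ} (h1 : a = b) (h2 : b = c) (X : Type u)
    (x : (Mo.M a).obj X) :
    Mo.castM h2 X (Mo.castM h1 X x) = Mo.castM (h1.trans h2) X x := by
  subst h1; subst h2; rfl

theorem mult_map_castM (k : ℕ) {a b : ℕ} (h : a = b) (X : Type u)
    (t : (Mo.M k).obj ((Mo.M a).obj X)) :
    Mo.mult k b X ((Mo.M k).map (Mo.castM h X) t)
      = Mo.castM (congrArg (k + ·) h) X (Mo.mult k a X t) := by
  subst h
  show Mo.mult k a X ((Mo.M k).map id t) = Mo.mult k a X t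
  rw [(Mo.M k).map_id]; rfl

theorem mult_castM (m : ℕ) {a b : ℕ} (h : a = b) (X : Type u)
    (t : (Mo.M a).obj ((Mo.M m).obj X)) :
    Mo.mult b m X (Mo.castM h ((Mo.M m).obj X) t)
      = Mo.castM (congrArg (· + m) h) X (Mo.mult a m X t) := by
  subst h; rfl

theorem castM_map {a b : ℕ} (h : a = b) {X Y : Type u} (f : X → Y)
    (t : (Mo.M a).obj X) :
    Mo.castM h Y ((Mo.M a).map f t) = (Mo.M b).map f (Mo.castM h X t) := by
  subst h; rfl

theorem assoc_app (n k m : ℕ) (X : Type u) (t : (Mo.M n).obj ((Mo.M k).obj ((Mo.M m).obj X))) :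
    Mo.mult n (k + m) X ((Mo.M n).map (Mo.mult k m X) t)
      = Mo.castM (Nat.add_assoc n k m) X (Mo.mult (n + k) m X (Mo.mult n k ((Mo.M m).obj X) t)) := by
  have := congrFun (Mo.assoc n k m X) t
  simpa [Function.comp, castM] using this

theorem mult_nat_app (n k : ℕ) {X Y : Type u} (f : X → Y)
    (t : (Mo.M n).obj ((Mo.M k).obj X)) :
    (Mo.M (n + k)).map f (Mo.mult n k X t) = Mo.mult n k Y ((Mo.M n).map ((Mo.M k).map f) t) := by
  exact congrFun (Mo.mult_nat n k f) t

/-- The free `M₀`-algebra on `MₙX`. -/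
def freeAlg (n : ℕ) (X : Type u) : M0Algebra Mo where
  carrier := (Mo.M n).obj X
  str := Mo.mult0 n X
  str_unit := Mo.unit_left n X
  str_mult := by
    funext t
    show Mo.castM (Nat.zero_add n) X (Mo.mult 0 n X
        ((Mo.M 0).map (Mo.castM (Nat.zero_add n) X ∘ Mo.mult 0 n X) t))
      = Mo.castM (Nat.zero_add n) X (Mo.mult 0 n X (Mo.mult 0 0 ((Mo.M n).obj X) t))
    rw [(Mo.M 0).map_comp, Function.comp_apply, Mo.mult_map_castM, Mo.castM_castM,
      Mo.assoc_app, Mo.castM_castM]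

attribute [reducible] freeAlg

/-- The canonical `M₁`-algebra `(MₙX, M_{n+1}X, μ^{1n})`. -/
def canonAlg (n : ℕ) (X : Type u) : M1Algebra Mo where
  A0 := Mo.freeAlg n X
  A1 := Mo.freeAlg (n + 1) X
  a10 := Mo.castM (Nat.add_comm 1 n) X ∘ Mo.mult 1 n X
  homomorphy := by
    funext t
    show Mo.castM (Nat.add_comm 1 n) X (Mo.mult 1 n X
        (Mo.castM (Nat.zero_add 1) ((Mo.M n).obj X) (Mo.mult 0 1 ((Mo.M n).obj X) t)))
      = Mo.castM (Nat.zero_add (n + 1)) X (Mo.mult 0 (n + 1) X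
          ((Mo.M 0).map (Mo.castM (Nat.add_comm 1 n) X ∘ Mo.mult 1 n X) t))
    rw [Mo.mult_castM, Mo.castM_castM,
      (Mo.M 0).map_comp, Function.comp_apply, Mo.mult_map_castM, Mo.castM_castM,
      Mo.assoc_app, Mo.castM_castM]
  coequalization := by
    funext t
    show Mo.castM (Nat.add_comm 1 n) X (Mo.mult 1 n X (Mo.mult 1 0 ((Mo.M n).obj X) t))
      = Mo.castM (Nat.add_comm 1 n) X (Mo.mult 1 n X
          ((Mo.M 1).map (Mo.castM (Nat.zero_add n) X ∘ Mo.mult 0 n X) t))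
    rw [(Mo.M 1).map_comp, Function.comp_apply, Mo.mult_map_castM, Mo.castM_castM,
      Mo.assoc_app, Mo.castM_castM]

attribute [reducible] canonAlg

end GradedMonad

namespace GradedMonad

variable (Mo : GradedMonad.{u})

theorem canonAlg_isCanonical (hd : Mo.Depth1) (n : ℕ) (X : Type u) :
    (Mo.canonAlg n X).IsCanonical := by
  intro B f hf
  have hf' : f ∘ Mo.mult0 n X = B.A0.str ∘ (Mo.M 0).map f := hf
  obtain ⟨_, hcq⟩ := hd n X
  have cond1 : (B.a10 ∘ (Mo.M 1).map f) ∘ Mo.mult0 1 ((Mo.M n).obj X)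
      = B.A1.str ∘ (Mo.M 0).map (B.a10 ∘ (Mo.M 1).map f) := by
    funext t
    show B.a10 ((Mo.M 1).map f (Mo.castM (Nat.zero_add 1) ((Mo.M n).obj X)
        (Mo.mult 0 1 ((Mo.M n).obj X) t)))
      = B.A1.str ((Mo.M 0).map (B.a10 ∘ (Mo.M 1).map f) t)
    have hhomo := congrFun B.homomorphy ((Mo.M 0).map ((Mo.M 1).map f) t)
    simp only [Function.comp_apply, GradedMonad.mult0] at hhomo
    rw [← Mo.castM_map (Nat.zero_add 1) (X := (Mo.M n).obj X) f,
      Mo.mult_nat_app 0 1 (X := (Mo.M n).obj X) f, (Mo.M 0).map_comp,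
      Function.comp_apply, ← hhomo]
  have cond2 : (B.a10 ∘ (Mo.M 1).map f) ∘ (Mo.M 1).map (Mo.mult0 n X)
      = (B.a10 ∘ (Mo.M 1).map f) ∘ Mo.mult 1 0 ((Mo.M n).obj X) := by
    funext t
    show B.a10 ((Mo.M 1).map f ((Mo.M 1).map (Mo.mult0 n X) t))
      = B.a10 ((Mo.M 1).map f (Mo.mult 1 0 ((Mo.M n).obj X) t))
    have hco := congrFun B.coequalization ((Mo.M 1).map ((Mo.M 0).map f) t)
    simp only [Function.comp_apply] at hco
    rw [← Function.comp_apply (f := (Mo.M 1).map f), ← (Mo.M 1).map_comp, hf',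
      (Mo.M 1).map_comp, Function.comp_apply, ← hco,
      ← Mo.mult_nat_app 1 0 (X := (Mo.M n).obj X) f]
  obtain ⟨g', ⟨hg'hom, hg'coeq⟩, hg'uniq⟩ := hcq B.A1 (B.a10 ∘ (Mo.M 1).map f) cond1 cond2
  refine ⟨g' ∘ Mo.castM (Nat.add_comm n 1) X, ⟨?_, ?_⟩, ?_⟩
  · -- IsM0Hom
    funext t
    show g' (Mo.castM (Nat.add_comm n 1) X (Mo.castM (Nat.zero_add (n+1)) X
        (Mo.mult 0 (n+1) X t)))
      = B.A1.str ((Mo.M 0).map (g' ∘ Mo.castM (Nat.add_comm n 1) X) t)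
    have hh := congrFun hg'hom ((Mo.M 0).map (Mo.castM (Nat.add_comm n 1) X) t)
    simp only [Function.comp_apply, GradedMonad.mult0] at hh
    rw [(Mo.M 0).map_comp, Function.comp_apply, ← hh, Mo.mult_map_castM,
      Mo.castM_castM, Mo.castM_castM]
  · -- g ∘ a10 = B.a10 ∘ M₁.map f
    funext t
    show g' (Mo.castM (Nat.add_comm n 1) X (Mo.castM (Nat.add_comm 1 n) X
        (Mo.mult 1 n X t))) = (B.a10 ∘ (Mo.M 1).map f) t
    rw [Mo.castM_castM]
    exact congrFun hg'coeq t
  · -- uniqueness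
    rintro g₂ ⟨hom₂, comm₂⟩
    have hom₂' : g₂ ∘ Mo.mult0 (n+1) X = B.A1.str ∘ (Mo.M 0).map g₂ := hom₂
    have c1 : (g₂ ∘ Mo.castM (Nat.add_comm 1 n) X) ∘ Mo.mult0 (1+n) X
        = B.A1.str ∘ (Mo.M 0).map (g₂ ∘ Mo.castM (Nat.add_comm 1 n) X) := by
      funext t
      show g₂ (Mo.castM (Nat.add_comm 1 n) X (Mo.castM (Nat.zero_add (1+n)) X
          (Mo.mult 0 (1+n) X t)))
        = B.A1.str ((Mo.M 0).map (g₂ ∘ Mo.castM (Nat.add_comm 1 n) X) t)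
      have hh := congrFun hom₂' ((Mo.M 0).map (Mo.castM (Nat.add_comm 1 n) X) t)
      simp only [Function.comp_apply, GradedMonad.mult0] at hh
      rw [(Mo.M 0).map_comp, Function.comp_apply, ← hh, Mo.mult_map_castM,
        Mo.castM_castM, Mo.castM_castM]
    have c2 : (g₂ ∘ Mo.castM (Nat.add_comm 1 n) X) ∘ Mo.mult 1 n X
        = B.a10 ∘ (Mo.M 1).map f := comm₂
    have huniq := hg'uniq (g₂ ∘ Mo.castM (Nat.add_comm 1 n) X) ⟨c1, c2⟩
    funext t
    have e1 : g₂ t = (g₂ ∘ Mo.castM (Nat.add_comm 1 n) X)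
        (Mo.castM (Nat.add_comm n 1) X t) := by
      show g₂ t = g₂ (Mo.castM (Nat.add_comm 1 n) X (Mo.castM (Nat.add_comm n 1) X t))
      rw [Mo.castM_castM]
      rfl
    rw [e1, huniq]
    rfl

end GradedMonad

theorem evaluates_isHom {Mo : GradedMonad.{u}} {Ω : GradedMonad.M0Algebra Mo}
    {Θ O Λ : Type u} {ar : O → ℕ} {cI : Θ → Ω.carrier}
    {pI : ∀ p : O, (Fin (ar p) → Ω.carrier) → Ω.carrier}
    {lI : Λ → ((Mo.M 1).obj Ω.carrier → Ω.carrier)}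
    (hpI : ∀ p : O,
      pI p ∘ (fun (t : (Mo.M 0).obj (Fin (ar p) → Ω.carrier)) (i : Fin (ar p)) =>
          Ω.str ((Mo.M 0).map (fun v => v i) t))
        = Ω.str ∘ (Mo.M 0).map (pI p))
    {n : ℕ} {φ : GFormula Θ O ar Λ n} {g : (Mo.M n).obj PUnit.{u+1} → Ω.carrier}
    (hev : Evaluates Mo Ω cI pI lI n φ g) :
    g ∘ Mo.mult0 n PUnit.{u+1} = Ω.str ∘ (Mo.M 0).map g := by
  induction hev with
  | const c =>
    funext t
    show Ω.str ((Mo.M (0+0)).map (fun _ => cI c) (Mo.mult 0 0 PUnit.{u+1} t))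
      = Ω.str ((Mo.M 0).map (Ω.str ∘ (Mo.M 0).map (fun _ => cI c)) t)
    rw [Mo.mult_nat_app 0 0 (X := PUnit.{u+1}) (fun _ => cI c) t]
    have h2 := congrFun Ω.str_mult ((Mo.M 0).map ((Mo.M 0).map (fun _ => cI c)) t)
    simp only [Function.comp_apply] at h2
    rw [← h2, ← Function.comp_apply (f := (Mo.M 0).map Ω.str), ← (Mo.M 0).map_comp]
  | @prop m p φs gs hall ih =>
    funext t
    show pI p (fun i => gs i (Mo.mult0 m PUnit.{u+1} t))
      = Ω.str ((Mo.M 0).map (fun u => pI p (fun i => gs i u)) t)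
    have e1 : ∀ i, gs i (Mo.mult0 m PUnit.{u+1} t) = Ω.str ((Mo.M 0).map (gs i) t) :=
      fun i => congrFun (ih i) t
    have e2 : ∀ i, (Mo.M 0).map (gs i) t
        = (Mo.M 0).map (fun v => v i)
            ((Mo.M 0).map (fun u (j : Fin (ar p)) => gs j u) t) := by
      intro i
      exact congrFun ((Mo.M 0).map_comp (fun u (j : Fin (ar p)) => gs j u)
        (fun v => v i)) t
    have e3 := congrFun (hpI p) ((Mo.M 0).map (fun u (j : Fin (ar p)) => gs j u) t)
    simp only [Function.comp_apply] at e3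
    calc pI p (fun i => gs i (Mo.mult0 m PUnit.{u+1} t))
        = pI p (fun i => Ω.str ((Mo.M 0).map (fun v => v i)
            ((Mo.M 0).map (fun u (j : Fin (ar p)) => gs j u) t))) := by
          congr 1; funext i; rw [e1 i, e2 i]
      _ = Ω.str ((Mo.M 0).map (pI p)
            ((Mo.M 0).map (fun u (j : Fin (ar p)) => gs j u) t)) := e3
      _ = Ω.str ((Mo.M 0).map (fun u => pI p (fun i => gs i u)) t) := by
          have e4 := congrFun ((Mo.M 0).map_comp
            (fun u (j : Fin (ar p)) => gs j u) (pI p)) t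
          simp only [Function.comp_apply] at e4
          rw [← e4]
          rfl
  | @mod m L ψ g' h' hev hhom hcomm ih => exact hhom

open GradedMonad

/-- **Expressiveness of graded logics.** Let `Mo` be a depth-1 graded monad on `Set`
with a graded semantics `α : G → M₁`, and consider a graded logic with truth-value
`M₀`-algebra `Ω`, truth constants `Θ` (interpreted by `cI`), propositional operators
`O` (interpreted by `M₀`-homomorphisms `Ω^k → Ω`, i.e. `pI` commutes with the
componentwise algebra structure) and modalities `Λ` (interpreted by `M₁`-algebra
structure maps `lI L : M₁Ω → Ω` with carriers `Ω`, `Ω`). If the logic is depth-0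
separating and depth-1 separating, then it is expressive: for every `n` the
evaluation maps of depth-`n` formulas are jointly injective on `Mₙ1`, and
consequently any two states of `G`-coalgebras that are not `α`-trace equivalent are
separated by some formula. -/
theorem graded_logic_expressiveness
    (Mo : GradedMonad.{u}) (hd : Mo.Depth1)
    (Ω : M0Algebra Mo) {Θ O Λ : Type u} {ar : O → ℕ}
    (cI : Θ → Ω.carrier)
    (pI : ∀ p : O, (Fin (ar p) → Ω.carrier) → Ω.carrier)
    (lI : Λ → ((Mo.M 1).obj Ω.carrier → Ω.carrier))
    -- each `pI p` is an `M₀`-homomorphism `Ω^{ar p} → Ω`: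
    (hpI : ∀ p : O,
      pI p ∘ (fun (t : (Mo.M 0).obj (Fin (ar p) → Ω.carrier)) (i : Fin (ar p)) =>
          Ω.str ((Mo.M 0).map (fun v => v i) t))
        = Ω.str ∘ (Mo.M 0).map (pI p))
    -- each `lI L` is the main structure map of an `M₁`-algebra with carriers `Ω`, `Ω`:
    (hlI₁ : ∀ L : Λ, lI L ∘ Mo.mult0 1 Ω.carrier = Ω.str ∘ (Mo.M 0).map (lI L))
    (hlI₂ : ∀ L : Λ, lI L ∘ Mo.mult 1 0 Ω.carrier = lI L ∘ (Mo.M 1).map Ω.str)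
    -- depth-0 separation:
    (h0sep : ∀ s t : (Mo.M 0).obj PUnit.{u + 1},
      (∀ c : Θ, Ω.str ((Mo.M 0).map (fun _ => cI c) s)
          = Ω.str ((Mo.M 0).map (fun _ => cI c) t)) → s = t)
    -- depth-1 separation:
    (h1sep : ∀ A : M1Algebra Mo, A.IsCanonical →
      ∀ 𝔄 : Set (A.A0.carrier → Ω.carrier),
        (∀ f ∈ 𝔄, Mo.IsM0Hom A.A0 Ω f) →
        (∀ s t : A.A0.carrier, (∀ f ∈ 𝔄, f s = f t) → s = t) →
        (∀ (p : O) (fs : Fin (ar p) → (A.A0.carrier → Ω.carrier)),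
          (∀ i, fs i ∈ 𝔄) → (fun a => pI p (fun i => fs i a)) ∈ 𝔄) →
        ∀ s t : A.A1.carrier,
          (∀ (L : Λ), ∀ f ∈ 𝔄, ∀ g : A.A1.carrier → Ω.carrier,
            Mo.IsM0Hom A.A1 Ω g → g ∘ A.a10 = lI L ∘ (Mo.M 1).map f →
            g s = g t) →
          s = t) :
    -- expressiveness: joint injectivity of evaluation maps on `Mₙ1` …
    (∀ (n : ℕ) (s t : (Mo.M n).obj PUnit.{u + 1}),
      (∀ (φ : GFormula Θ O ar Λ n) (g : (Mo.M n).obj PUnit.{u + 1} → Ω.carrier),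
        Evaluates Mo Ω cI pI lI n φ g → g s = g t) →
      s = t) ∧
    -- … and consequently separation of states that are not `α`-trace equivalent
    (∀ (G : SetFunctor.{u}) (α : ∀ X : Type u, G.obj X → (Mo.M 1).obj X),
      (∀ {X Y : Type u} (f : X → Y), (Mo.M 1).map f ∘ α X = α Y ∘ G.map f) →
      ∀ {X Y : Type u} (γ : X → G.obj X) (δ : Y → G.obj Y) (x : X) (y : Y),
        ¬ (∀ n : ℕ, Mo.traceSeq G α γ n x = Mo.traceSeq G α δ n y) →
        ∃ (n : ℕ) (φ : GFormula Θ O ar Λ n)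
          (g : (Mo.M n).obj PUnit.{u + 1} → Ω.carrier),
          Evaluates Mo Ω cI pI lI n φ g ∧
          g (Mo.traceSeq G α γ n x) ≠ g (Mo.traceSeq G α δ n y)) := by
  have part1 : ∀ (n : ℕ) (s t : (Mo.M n).obj PUnit.{u+1}),
      (∀ (φ : GFormula Θ O ar Λ n) (g : (Mo.M n).obj PUnit.{u+1} → Ω.carrier),
        Evaluates Mo Ω cI pI lI n φ g → g s = g t) → s = t := by
    intro n
    induction n with
    | zero =>
      intro s t H
      exact h0sep s t (fun c => H (.const c) _ (Evaluates.const c))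
    | succ n ih =>
      intro s t H
      refine h1sep (Mo.canonAlg n PUnit.{u+1}) (Mo.canonAlg_isCanonical hd n PUnit.{u+1})
        {f | ∃ φ : GFormula Θ O ar Λ n, Evaluates Mo Ω cI pI lI n φ f} ?_ ?_ ?_ s t ?_
      · rintro f ⟨φ, hφ⟩
        exact evaluates_isHom hpI hφ
      · intro s' t' h'
        exact ih s' t' (fun φ g hev => h' g ⟨φ, hev⟩)
      · intro p fs hfs
        choose φs hφs using hfs
        exact ⟨.prop p φs, Evaluates.prop p φs fs hφs⟩
      · rintro L f ⟨φ, hφ⟩ g hg hcomm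
        exact H (.mod L φ) g (Evaluates.mod L φ f g hφ hg hcomm)
  refine ⟨part1, ?_⟩
  intro G α hα X Y γ δ x y hne
  rw [not_forall] at hne
  obtain ⟨n, hn⟩ := hne
  by_contra hc
  push_neg at hc
  exact hn (part1 n _ _ (fun φ g hev => hc n φ g hev))
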